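/- There exists an aggregate allocation instance (5 agents, 3 types, 5 objects) that is PI-rationalizable but not rationalizable as strict-core stable: some type-homogeneous preference profile makes the allocation Pareto efficient and individually rational, yet no type-homogeneous profile makes it strict-core stable. -/
import Mathlib

def Blocks {I H : Type*} (P : I → H → H → Prop) (ω x : I → H)
    (S : Finset I) : Prop :=
  S.Nonempty ∧ ∃ σ : Equiv.Perm I,
    (∀ i ∉ S, σ i = i) ∧ (∀ i ∈ S, σ i ∈ S) ∧
    (∀ i ∈ S, ω (σ i) = x i ∨ P i (ω (σ i)) (x i)) ∧
    (∃ i ∈ S, P i (ω (σ i)) (x i))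

def SLO {H : Type*} (R : H → H → Prop) : Prop :=
  (∀ a b, R a b → ¬ R b a) ∧ (∀ a b c, R a b → R b c → R a c) ∧
  (∀ a b, a ≠ b → R a b ∨ R b a)

/-- Rank tables for the three preference types: lower rank = better. -/
def myRank : Fin 3 → Fin 5 → ℕ := ![![1,0,2,3,4], ![2,1,0,3,4], ![0,1,2,3,4]]

/-- Concrete type-homogeneous preference profile. -/
def myP : Fin 3 → Fin 5 → Fin 5 → Prop := fun t a b => myRank t a < myRank t b

/-- Weak-improvement condition for agent `i` receiving the bundle of agent `b`. -/
def W (i b : Fin 5) : Prop :=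
  (![1,2,1,0,0] : Fin 5 → Fin 5) b = ![1,2,1,0,0] i ∨
    myP ((![0,1,0,2,0] : Fin 5 → Fin 3) i) (![1,2,1,0,0] b) (![1,2,1,0,0] i)

set_option synthInstance.maxHeartbeats 1000000 in
set_option synthInstance.maxSize 2048 in
set_option maxHeartbeats 4000000 in
set_option maxRecDepth 10000 in
theorem myKey : ∀ b0 b1 b2 b3 b4 : Fin 5,
    (b0 ≠ b4 ∧ b1 ≠ b4 ∧ b2 ≠ b4 ∧ b3 ≠ b4 ∧ b0 ≠ b2 ∧
     W 0 b0 ∧ W 1 b1 ∧ W 2 b2 ∧ W 3 b3 ∧ W 4 b4) →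
    ((![1,2,1,0,0] : Fin 5 → Fin 5) b0 = 1 ∧ (![1,2,1,0,0] : Fin 5 → Fin 5) b1 = 2 ∧
     (![1,2,1,0,0] : Fin 5 → Fin 5) b2 = 1 ∧ (![1,2,1,0,0] : Fin 5 → Fin 5) b3 = 0 ∧
     (![1,2,1,0,0] : Fin 5 → Fin 5) b4 = 0) := by
  unfold W myP myRank
  decide

/-- The 3-cycle (1 3 4) on `Fin 5`. -/
def cyc : Equiv.Perm (Fin 5) where
  toFun := ![0,3,2,4,1]
  invFun := ![0,4,2,1,3]
  left_inv := by decide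
  right_inv := by decide

theorem stmt_11 :
    let τ : Fin 5 → Fin 3 := ![0, 1, 0, 2, 0]
    let ω : Fin 5 → Fin 5 := ![0, 1, 1, 2, 0]
    let x : Fin 5 → Fin 5 := ![1, 2, 1, 0, 0]
    (∃ P : Fin 3 → Fin 5 → Fin 5 → Prop,
      (∀ t, SLO (P t)) ∧
      (∀ i, x i = ω i ∨ P (τ i) (x i) (ω i)) ∧
      (¬ ∃ σ : Equiv.Perm (Fin 5),
        (∀ i, x (σ i) = x i ∨ P (τ i) (x (σ i)) (x i)) ∧
        (∃ i, P (τ i) (x (σ i)) (x i)))) ∧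
    (¬ ∃ P : Fin 3 → Fin 5 → Fin 5 → Prop,
      (∀ t, SLO (P t)) ∧
      ¬ ∃ S : Finset (Fin 5), Blocks (fun i => P (τ i)) ω x S) := by
  intro τ ω x
  constructor
  · refine ⟨myP, ?_, ?_, ?_⟩
    · unfold SLO myP myRank; decide
    · unfold myP myRank; decide
    · rintro ⟨σ, h1, i, h2⟩
      have hne : ∀ j k : Fin 5, j ≠ k → σ j ≠ σ k :=
        fun j k h hc => h (σ.injective hc)
      have key := myKey (σ 0) (σ 1) (σ 2) (σ 3) (σ 4)
        ⟨hne 0 4 (by decide), hne 1 4 (by decide), hne 2 4 (by decide),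
         hne 3 4 (by decide), hne 0 2 (by decide),
         h1 0, h1 1, h1 2, h1 3, h1 4⟩
      obtain ⟨k0, k1, k2, k3, k4⟩ := key
      have e : ∀ j, x (σ j) = x j := by
        intro j; fin_cases j; exacts [k0, k1, k2, k3, k4]
      simp only [myP] at h2
      rw [e i] at h2
      exact lt_irrefl _ h2
  · rintro ⟨P, hSLO, hnoblock⟩
    apply hnoblock
    rcases (hSLO 0).2.2 0 1 (by decide) with h | h
    · exact ⟨{0}, ⟨0, by decide⟩, Equiv.refl _, by simp, by simp,
        by intro i hi; simp at hi; subst hi; right; exact h,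
        ⟨0, by simp, h⟩⟩
    · refine ⟨{1,3,4}, ⟨1, by decide⟩, cyc, ?_, ?_, ?_, ?_⟩
      · intro i hi; fin_cases i <;> simp_all <;> rfl
      · intro i hi; fin_cases i <;> simp_all <;> decide
      · intro i hi; fin_cases i <;> simp_all
        · left; rfl
        · left; rfl
        · right; exact h
      · exact ⟨4, by decide, h⟩
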